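/- Let f(x) = |x| on ℝ and let v̄ ∈ ℝ. The outer limiting subdifferential of f at 0 with respect to v̄ is: ∂^>_{v̄} f(0) = {−1, 1} if v̄ ∈ (−1, 1); {−1} if v̄ ≥ 1; {1} if v̄ ≤ −1. In particular v̄ ∉ ∂^>_{v̄} f(0) for every v̄ ∈ ℝ. -/

import Mathlib

open Filter Metric Set
open scoped Topology RealInnerProductSpace

noncomputable section

abbrev Eu (n : ℕ) := EuclideanSpace ℝ (Fin n)

section GeneralDefs

variable {E F : Type*} [NormedAddCommGroup E] [NormedSpace ℝ E]
  [NormedAddCommGroup F] [NormedSpace ℝ F]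

/-- `v` is a proximal normal vector to `A` at `a`: for some `t > 0`,
`a` is a nearest point of `A` to `a + t • v`. -/
def proxNormal (A : Set E) (a : E) : Set E :=
  {v | ∃ t : ℝ, 0 < t ∧ ‖t • v‖ = Metric.infDist (a + t • v) A}

/-- the set of nearest points of `K` to `x` (metric projection). -/
def projSet (K : Set E) (x : E) : Set E :=
  {y | y ∈ K ∧ ∀ z ∈ K, ‖x - y‖ ≤ ‖x - z‖}

/-- the contingent (tangent) cone to `X` at `x`. -/
def tangCone (X : Set E) (x : E) : Set E :=
  {w | ∃ (t : ℕ → ℝ) (v : ℕ → E), (∀ k, 0 < t k) ∧ Tendsto t atTop (𝓝 0) ∧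
    Tendsto v atTop (𝓝 w) ∧ ∀ k, x + t k • v k ∈ X}

/-- `A` is locally closed at `a`. -/
def LocallyClosedAt (A : Set E) (a : E) : Prop := ∃ U ∈ 𝓝 a, IsClosed (A ∩ U)

/-- the graph of the restriction `S|_X`. -/
def svGraph (S : E → Set F) (X : Set E) : Set (E × F) := {p | p.1 ∈ X ∧ p.2 ∈ S p.1}

/-- the Lipschitz-like property of `S` relative to `X` at `x₀` for `u₀` with constant `κ`. -/
def LipschitzLikeRel (S : E → Set F) (X : Set E) (x₀ : E) (u₀ : F) (κ : ℝ) : Prop :=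
  LocallyClosedAt (svGraph S univ) (x₀, u₀) ∧
  ∃ V ∈ 𝓝 x₀, ∃ W ∈ 𝓝 u₀, ∀ x ∈ X ∩ V, ∀ x' ∈ X ∩ V, ∀ u ∈ S x' ∩ W,
    ∃ u'' ∈ S x, ‖u - u''‖ ≤ κ * ‖x' - x‖

/-- the graphical modulus of `S` relative to `X` at `x₀` for `u₀` (as an extended real,
the infimum of all Lipschitz-like constants). -/
def gmod (S : E → Set F) (X : Set E) (x₀ : E) (u₀ : F) : EReal :=
  sInf {c : EReal | ∃ κ : ℝ, 0 ≤ κ ∧ c = (κ : EReal) ∧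
    ∃ V ∈ 𝓝 x₀, ∃ W ∈ 𝓝 u₀, ∀ x ∈ X ∩ V, ∀ x' ∈ X ∩ V, ∀ u ∈ S x' ∩ W,
      ∃ u'' ∈ S x, ‖u - u''‖ ≤ κ * ‖x' - x‖}

/-- the horizon cone of `A`. -/
def horizonCone (A : Set E) : Set E :=
  {w | ∃ (a : ℕ → E) (l : ℕ → ℝ), (∀ k, a k ∈ A) ∧ (∀ k, 0 < l k) ∧
    Tendsto l atTop (𝓝 0) ∧ Tendsto (fun k => l k • a k) atTop (𝓝 w)}

/-- extended-real absolute difference `|a - b|`. -/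
def eabsdiff (a b : EReal) : EReal := max (a - b) (b - a)

/-- `f` is locally Lipschitz continuous at `x₀` relative to `X`. -/
def RelLipschitzAt (f : E → EReal) (X : Set E) (x₀ : E) : Prop :=
  ∃ κ : ℝ, 0 ≤ κ ∧ ∃ V ∈ 𝓝 x₀, ∀ x ∈ X ∩ V, ∀ y ∈ X ∩ V,
    eabsdiff (f x) (f y) ≤ ((κ * ‖x - y‖ : ℝ) : EReal)

/-- the Lipschitz modulus of `f` at `x₀` relative to `X` (as an extended real). -/
def relLipMod (f : E → EReal) (X : Set E) (x₀ : E) : EReal :=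
  sInf {c : EReal | ∃ κ : ℝ, 0 ≤ κ ∧ c = (κ : EReal) ∧ ∃ V ∈ 𝓝 x₀,
    ∀ x ∈ X ∩ V, ∀ y ∈ X ∩ V, eabsdiff (f x) (f y) ≤ ((κ * ‖x - y‖ : ℝ) : EReal)}

end GeneralDefs

section InnerDefs

variable {E F : Type*} [NormedAddCommGroup E] [InnerProductSpace ℝ E]
  [NormedAddCommGroup F] [InnerProductSpace ℝ F]

/-- the regular (Fréchet) normal cone to `A ⊆ E × F` at `a`. -/
def regNormalP (A : Set (E × F)) (a : E × F) : Set (E × F) :=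
  {v | ∀ ε : ℝ, 0 < ε → ∃ δ > 0, ∀ b ∈ A, ‖b - a‖ ≤ δ →
    ⟪v.1, b.1 - a.1⟫ + ⟪v.2, b.2 - a.2⟫ ≤ ε * ‖b - a‖}

/-- the limiting (Mordukhovich) normal cone to `A ⊆ E × F` at `a`. -/
def limNormalP (A : Set (E × F)) (a : E × F) : Set (E × F) :=
  {v | ∃ (b : ℕ → E × F) (w : ℕ → E × F), (∀ k, b k ∈ A) ∧
    (∀ k, w k ∈ regNormalP A (b k)) ∧ Tendsto b atTop (𝓝 a) ∧ Tendsto w atTop (𝓝 v)}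

/-- the limiting coderivative of `S` at `x` for `u`:
`xs ∈ coderiv S x u us ↔ (xs, -us) ∈ N_{graph S}(x, u)`. -/
def coderiv (S : E → Set F) (x : E) (u : F) (us : F) : Set E :=
  {xs | (xs, -us) ∈ limNormalP (svGraph S univ) (x, u)}

/-- the projectional coderivative of `S` at `x₀` for `u₀` with respect to `X`. -/
def projCoderiv (S : E → Set F) (X : Set E) (x₀ : E) (u₀ : F) (us : F) : Set E :=
  {xs | ∃ (x : ℕ → E) (u : ℕ → F) (xv : ℕ → E) (uv : ℕ → F) (y : ℕ → E),
    (∀ k, (x k, u k) ∈ svGraph S X) ∧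
    (∀ k, (xv k, -(uv k)) ∈ limNormalP (svGraph S X) (x k, u k)) ∧
    (∀ k, y k ∈ projSet (tangCone X (x k)) (xv k)) ∧
    Tendsto x atTop (𝓝 x₀) ∧ Tendsto u atTop (𝓝 u₀) ∧
    Tendsto uv atTop (𝓝 us) ∧ Tendsto y atTop (𝓝 xs)}

/-- the regular (Fréchet) subdifferential of an extended-real-valued function. -/
def regSubdiff (g : E → EReal) (x : E) : Set E :=
  {v | ∀ ε : ℝ, 0 < ε → ∃ δ > 0, ∀ y, ‖y - x‖ ≤ δ →
    g x + ((⟪v, y - x⟫ - ε * ‖y - x‖ : ℝ) : EReal) ≤ g y}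

/-- the limiting (Mordukhovich) subdifferential. -/
def limSubdiff (g : E → EReal) (x : E) : Set E :=
  {v | ∃ (xk vk : ℕ → E), Tendsto xk atTop (𝓝 x) ∧
    Tendsto (fun k => g (xk k)) atTop (𝓝 (g x)) ∧
    (∀ k, vk k ∈ regSubdiff g (xk k)) ∧ Tendsto vk atTop (𝓝 v)}

/-- the horizon (singular) subdifferential. -/
def horizonSubdiff (g : E → EReal) (x : E) : Set E :=
  {v | ∃ (xk vk : ℕ → E) (lk : ℕ → ℝ), Tendsto xk atTop (𝓝 x) ∧
    Tendsto (fun k => g (xk k)) atTop (𝓝 (g x)) ∧ (∀ k, 0 < lk k) ∧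
    Tendsto lk atTop (𝓝 0) ∧ (∀ k, vk k ∈ regSubdiff g (xk k)) ∧
    Tendsto (fun k => lk k • vk k) atTop (𝓝 v)}

/-- the outer limiting subdifferential of `g` at `xb` with respect to `vb`. -/
def outerSubdiffWrt (g : E → EReal) (xb vb : E) : Set E :=
  {v | ∃ (xk vk : ℕ → E), Tendsto xk atTop (𝓝 xb) ∧
    Tendsto (fun k => g (xk k)) atTop (𝓝 (g xb)) ∧
    (∀ k, g xb + ((⟪vb, xk k - xb⟫ : ℝ) : EReal) < g (xk k)) ∧
    (∀ k, vk k ∈ limSubdiff g (xk k)) ∧ Tendsto vk atTop (𝓝 v)}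

/-- `D` is a convex polyhedron (finite intersection of closed half-spaces). -/
def IsPolyhedral (D : Set E) : Prop :=
  ∃ s : Finset (E × ℝ), D = {v | ∀ p ∈ s, ⟪p.1, v⟫ ≤ p.2}

/-- the support function of `D`. -/
def supportFn (D : Set E) : E → EReal :=
  fun x => sSup ((fun v => ((⟪v, x⟫ : ℝ) : EReal)) '' D)

end InnerDefs

section AbsExample

lemma regSubdiff_abs_of_pos {x : ℝ} (hx : 0 < x) :
    regSubdiff (fun x : ℝ => ((|x| : ℝ) : EReal)) x = {1} := by
  ext v
  simp only [regSubdiff, Set.mem_setOf_eq, Set.mem_singleton_iff, RCLike.inner_apply,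
    conj_trivial]
  constructor
  · intro h
    have key : ∀ ε : ℝ, 0 < ε → |v - 1| ≤ ε := by
      intro ε hε
      obtain ⟨δ, hδ, hδ'⟩ := h ε hε
      set c := min δ x with hc
      have hc0 : 0 < c := lt_min hδ hx
      have hcx : c ≤ x := min_le_right _ _
      have h1 := hδ' (x + c) (by
        rw [show x + c - x = c by ring, Real.norm_eq_abs, abs_of_pos hc0]
        exact min_le_left _ _)
      have h2 := hδ' (x - c) (by
        rw [show x - c - x = -c by ring, Real.norm_eq_abs, abs_neg, abs_of_pos hc0]
        exact min_le_left _ _)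
      rw [show x + c - x = c by ring, Real.norm_eq_abs, abs_of_pos hc0,
        abs_of_pos hx, abs_of_pos (by linarith : (0:ℝ) < x + c),
        ← EReal.coe_add, EReal.coe_le_coe_iff] at h1
      rw [show x - c - x = -c by ring, Real.norm_eq_abs, abs_neg, abs_of_pos hc0,
        abs_of_pos hx, abs_of_nonneg (by linarith : (0:ℝ) ≤ x - c),
        ← EReal.coe_add, EReal.coe_le_coe_iff] at h2
      rw [abs_le]
      constructor <;> nlinarith
    by_contra hne
    have habs : 0 < |v - 1| := abs_pos.2 (sub_ne_zero.2 hne)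
    have := key (|v - 1| / 2) (by linarith)
    linarith
  · rintro rfl ε hε
    refine ⟨1, one_pos, fun y hy => ?_⟩
    rw [← EReal.coe_add, EReal.coe_le_coe_iff, abs_of_pos hx, Real.norm_eq_abs]
    have h1 := le_abs_self y
    have h2 : 0 ≤ ε * |y - x| := by positivity
    linarith

lemma regSubdiff_abs_of_neg {x : ℝ} (hx : x < 0) :
    regSubdiff (fun x : ℝ => ((|x| : ℝ) : EReal)) x = {-1} := by
  ext v
  simp only [regSubdiff, Set.mem_setOf_eq, Set.mem_singleton_iff, RCLike.inner_apply,
    conj_trivial]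
  constructor
  · intro h
    have key : ∀ ε : ℝ, 0 < ε → |v + 1| ≤ ε := by
      intro ε hε
      obtain ⟨δ, hδ, hδ'⟩ := h ε hε
      set c := min δ (-x) with hc
      have hc0 : 0 < c := lt_min hδ (by linarith)
      have hcx : c ≤ -x := min_le_right _ _
      have h1 := hδ' (x + c) (by
        rw [show x + c - x = c by ring, Real.norm_eq_abs, abs_of_pos hc0]
        exact min_le_left _ _)
      have h2 := hδ' (x - c) (by
        rw [show x - c - x = -c by ring, Real.norm_eq_abs, abs_neg, abs_of_pos hc0]
        exact min_le_left _ _)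
      rw [show x + c - x = c by ring, Real.norm_eq_abs, abs_of_pos hc0,
        abs_of_neg hx, abs_of_nonpos (by linarith : x + c ≤ 0),
        ← EReal.coe_add, EReal.coe_le_coe_iff] at h1
      rw [show x - c - x = -c by ring, Real.norm_eq_abs, abs_neg, abs_of_pos hc0,
        abs_of_neg hx, abs_of_neg (by linarith : x - c < 0),
        ← EReal.coe_add, EReal.coe_le_coe_iff] at h2
      rw [abs_le]
      constructor <;> nlinarith
    by_contra hne
    have habs : 0 < |v + 1| := abs_pos.2 (by intro h0; apply hne; linarith)
    have := key (|v + 1| / 2) (by linarith)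
    linarith
  · rintro rfl ε hε
    refine ⟨1, one_pos, fun y hy => ?_⟩
    rw [← EReal.coe_add, EReal.coe_le_coe_iff, abs_of_neg hx, Real.norm_eq_abs]
    have h1 := neg_abs_le y
    have h2 : 0 ≤ ε * |y - x| := by positivity
    linarith

lemma limSubdiff_abs_of_pos {x : ℝ} (hx : 0 < x) :
    limSubdiff (fun x : ℝ => ((|x| : ℝ) : EReal)) x = {1} := by
  ext v
  constructor
  · rintro ⟨yk, wk, hy, _, hmem, hw⟩
    have hev : ∀ᶠ j in atTop, 0 < yk j := hy.eventually (eventually_gt_nhds hx)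
    have hev1 : ∀ᶠ j in atTop, (1:ℝ) = wk j := hev.mono fun j hj => by
      have := hmem j
      rw [regSubdiff_abs_of_pos hj, Set.mem_singleton_iff] at this
      exact this.symm
    have : Tendsto wk atTop (𝓝 1) := tendsto_const_nhds.congr' hev1
    exact (tendsto_nhds_unique hw this)
  · rintro rfl
    exact ⟨fun _ => x, fun _ => 1, tendsto_const_nhds, tendsto_const_nhds,
      fun k => by rw [regSubdiff_abs_of_pos hx]; rfl, tendsto_const_nhds⟩

lemma limSubdiff_abs_of_neg {x : ℝ} (hx : x < 0) :
    limSubdiff (fun x : ℝ => ((|x| : ℝ) : EReal)) x = {-1} := by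
  ext v
  constructor
  · rintro ⟨yk, wk, hy, _, hmem, hw⟩
    have hev : ∀ᶠ j in atTop, yk j < 0 := hy.eventually (eventually_lt_nhds hx)
    have hev1 : ∀ᶠ j in atTop, (-1:ℝ) = wk j := hev.mono fun j hj => by
      have := hmem j
      rw [regSubdiff_abs_of_neg hj, Set.mem_singleton_iff] at this
      exact this.symm
    have : Tendsto wk atTop (𝓝 (-1)) := tendsto_const_nhds.congr' hev1
    exact (tendsto_nhds_unique hw this)
  · rintro rfl
    exact ⟨fun _ => x, fun _ => -1, tendsto_const_nhds, tendsto_const_nhds,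
      fun k => by rw [regSubdiff_abs_of_neg hx]; rfl, tendsto_const_nhds⟩

lemma outer_mem_one {vb : ℝ} (h : vb < 1) :
    (1:ℝ) ∈ outerSubdiffWrt (fun x : ℝ => ((|x| : ℝ) : EReal)) 0 vb := by
  refine ⟨fun k => 1/(k+1), fun _ => 1, tendsto_one_div_add_atTop_nhds_zero_nat, ?_, ?_, ?_,
    tendsto_const_nhds⟩
  · have : Tendsto (fun k : ℕ => |1/((k:ℝ)+1)|) atTop (𝓝 |0|) :=
      tendsto_one_div_add_atTop_nhds_zero_nat.abs
    exact EReal.tendsto_coe.2 this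
  · intro k
    have hk : (0:ℝ) < 1/((k:ℝ)+1) := by positivity
    simp only [RCLike.inner_apply, conj_trivial, sub_zero, abs_zero, EReal.coe_zero, zero_add]
    rw [EReal.coe_lt_coe_iff, abs_of_pos hk]
    nlinarith
  · intro k
    rw [limSubdiff_abs_of_pos (by positivity : (0:ℝ) < 1/((k:ℝ)+1))]
    rfl

lemma outer_mem_neg_one {vb : ℝ} (h : -1 < vb) :
    (-1:ℝ) ∈ outerSubdiffWrt (fun x : ℝ => ((|x| : ℝ) : EReal)) 0 vb := by
  refine ⟨fun k => -(1/(k+1)), fun _ => -1, ?_, ?_, ?_, ?_, tendsto_const_nhds⟩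
  · simpa using (tendsto_one_div_add_atTop_nhds_zero_nat : Tendsto (fun n : ℕ => 1 / ((n : ℝ) + 1)) atTop (𝓝 0)).neg
  · have : Tendsto (fun k : ℕ => |(-(1/((k:ℝ)+1)))|) atTop (𝓝 |0|) := by
      simpa using (tendsto_one_div_add_atTop_nhds_zero_nat : Tendsto (fun n : ℕ => 1 / ((n : ℝ) + 1)) atTop (𝓝 0)).neg.abs
    exact EReal.tendsto_coe.2 this
  · intro k
    have hk : (0:ℝ) < 1/((k:ℝ)+1) := by positivity
    simp only [RCLike.inner_apply, conj_trivial, sub_zero, abs_zero, EReal.coe_zero, zero_add]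
    rw [EReal.coe_lt_coe_iff, abs_neg, abs_of_pos hk]
    nlinarith
  · intro k
    rw [limSubdiff_abs_of_neg (by simpa using (by positivity : (0:ℝ) < 1/((k:ℝ)+1)) : -(1/((k:ℝ)+1)) < 0)]
    rfl

lemma outer_cases {vb v : ℝ}
    (hv : v ∈ outerSubdiffWrt (fun x : ℝ => ((|x| : ℝ) : EReal)) 0 vb) :
    (v = -1 ∨ v = 1) ∧ (1 ≤ vb → v = -1) ∧ (vb ≤ -1 → v = 1) := by
  obtain ⟨xk, vk, hx, hfx, hlt, hmem, hvk⟩ := hv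
  have hstrict : ∀ k, vb * xk k < |xk k| := by
    intro k
    have h := hlt k
    simp only [RCLike.inner_apply, conj_trivial, sub_zero, abs_zero, EReal.coe_zero,
      zero_add] at h
    simpa [mul_comm] using EReal.coe_lt_coe_iff.1 h
  have hne : ∀ k, xk k ≠ 0 := by
    intro k h0
    have := hstrict k
    rw [h0] at this
    simp at this
  have hsign : ∀ k, (xk k < 0 ∧ vk k = -1) ∨ (0 < xk k ∧ vk k = 1) := by
    intro k
    rcases lt_or_gt_of_ne (hne k) with h | h
    · left
      refine ⟨h, ?_⟩
      have := hmem k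
      rwa [limSubdiff_abs_of_neg h, Set.mem_singleton_iff] at this
    · right
      refine ⟨h, ?_⟩
      have := hmem k
      rwa [limSubdiff_abs_of_pos h, Set.mem_singleton_iff] at this
  refine ⟨?_, ?_, ?_⟩
  · have h1 : ∀ k, |vk k| = 1 := fun k => by
      rcases hsign k with ⟨_, h⟩ | ⟨_, h⟩ <;> simp [h]
    have habs : Tendsto (fun k => |vk k|) atTop (𝓝 |v|) := hvk.abs
    have : |v| = 1 := tendsto_nhds_unique (habs.congr h1) tendsto_const_nhds
    rcases abs_eq (by norm_num : (0:ℝ) ≤ 1) |>.1 this with h | h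
    · right; exact h
    · left; exact h
  · intro h1vb
    have hconst : ∀ k, vk k = -1 := by
      intro k
      rcases hsign k with ⟨_, h⟩ | ⟨hpos, _⟩
      · exact h
      · exfalso
        have := hstrict k
        rw [abs_of_pos hpos] at this
        nlinarith
    exact tendsto_nhds_unique hvk (tendsto_const_nhds.congr fun k => (hconst k).symm)
  · intro h1vb
    have hconst : ∀ k, vk k = 1 := by
      intro k
      rcases hsign k with ⟨hneg, _⟩ | ⟨_, h⟩
      · exfalso
        have := hstrict k
        rw [abs_of_neg hneg] at this
        nlinarith
      · exact h
    exact tendsto_nhds_unique hvk (tendsto_const_nhds.congr fun k => (hconst k).symm)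

end AbsExample

/-- Example 4.1: for `f(x) = |x|`, the outer limiting subdifferential of
`f` at `0` with respect to `v̄` is `{-1, 1}` for `v̄ ∈ (-1, 1)`, `{-1}` for `v̄ ≥ 1`, `{1}`
for `v̄ ≤ -1`; in particular `v̄ ∉ ∂^>_{v̄} f(0)` for every `v̄`. -/
theorem outerSubdiff_abs (vb : ℝ) :
    (-1 < vb ∧ vb < 1 →
      outerSubdiffWrt (fun x : ℝ => ((|x| : ℝ) : EReal)) 0 vb = {-1, 1}) ∧
    (1 ≤ vb → outerSubdiffWrt (fun x : ℝ => ((|x| : ℝ) : EReal)) 0 vb = {-1}) ∧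
    (vb ≤ -1 → outerSubdiffWrt (fun x : ℝ => ((|x| : ℝ) : EReal)) 0 vb = {1}) ∧
    vb ∉ outerSubdiffWrt (fun x : ℝ => ((|x| : ℝ) : EReal)) 0 vb := by
  refine ⟨?_, ?_, ?_, ?_⟩
  · rintro ⟨h1, h2⟩
    ext v
    simp only [Set.mem_insert_iff, Set.mem_singleton_iff]
    constructor
    · intro hv
      exact (outer_cases hv).1
    · rintro (rfl | rfl)
      · exact outer_mem_neg_one h1
      · exact outer_mem_one h2
  · intro h
    ext v
    simp only [Set.mem_singleton_iff]
    constructor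
    · intro hv
      exact (outer_cases hv).2.1 h
    · rintro rfl
      exact outer_mem_neg_one (by linarith)
  · intro h
    ext v
    simp only [Set.mem_singleton_iff]
    constructor
    · intro hv
      exact (outer_cases hv).2.2 h
    · rintro rfl
      exact outer_mem_one (by linarith)
  · intro hvb
    obtain ⟨hc1, hc2, hc3⟩ := outer_cases hvb
    rcases hc1 with h | h
    · have := hc3 (le_of_eq h)
      rw [h] at this; norm_num at this
    · have := hc2 (le_of_eq h.symm)
      rw [h] at this; norm_num at this
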